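/- arXiv:2412.07358 — 5 statements merged into one kernel-verified Lean document; each statement's English description precedes it below -/
import Mathlib

section
/- Let O be a valuation ring that is henselian as a local ring, and let p be a prime ideal of O. Then the localization O_p of O at p is a henselian local ring. In particular, a henselian valuation ring is locally henselian: every stalk of the structure sheaf of Spec O is a henselian local ring. -/
open AlgebraicGeometry Polynomial

universe u

theorem my_henselian_localization (O : Type u) [CommRing O] [IsDomain O] [ValuationRing O]
    [HenselianLocalRing O] (p : Ideal O) [hp : p.IsPrime] :
    HenselianLocalRing (Localization.AtPrime p) := by
  set R := Localization.AtPrime p with hR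
  let φ : O →+* R := algebraMap O R
  have hφinj : Function.Injective φ := IsLocalization.injective (M := p.primeCompl) R (by
    intro s hs
    exact mem_nonZeroDivisors_of_ne_zero (fun h0 => hs (show s ∈ p from h0 ▸ p.zero_mem)))
  have hmem : ∀ z ∈ p, φ z ∈ IsLocalRing.maximalIdeal R := by
    intro z hz
    rw [← Localization.AtPrime.map_eq_maximalIdeal]
    exact Ideal.mem_map_of_mem φ hz
  have hsurj : ∀ x ∈ IsLocalRing.maximalIdeal R, ∃ z ∈ p, φ z = x := by
    intro x hx
    rw [← Localization.AtPrime.map_eq_maximalIdeal,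
      IsLocalization.mem_map_algebraMap_iff p.primeCompl] at hx
    obtain ⟨⟨⟨y, hy⟩, ⟨s, hs⟩⟩, hx⟩ := hx
    obtain ⟨c, hc | hc⟩ := ValuationRing.cond s y
    · simp only at hx
      refine ⟨c, (hp.mem_or_mem (hc ▸ hy)).resolve_left hs, ?_⟩
      have hus : IsUnit (φ s) := IsLocalization.map_units (M := p.primeCompl) R ⟨s, hs⟩
      refine hus.mul_left_cancel ?_
      rw [← map_mul, hc, ← hx, mul_comm]
    · exact absurd (hc ▸ p.mul_mem_right c hy) hs
  refine ⟨fun f hf a₀ ha₀ hu => ?_⟩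
  set n := f.natDegree with hn
  have hn1 : 1 ≤ n := by
    rcases Nat.eq_zero_or_pos n with h0 | h1
    · exfalso
      have hf1 : f = 1 := hf.natDegree_eq_zero.mp h0
      rw [hf1, eval_one] at ha₀
      exact (IsLocalRing.maximalIdeal.isMaximal R).ne_top (Ideal.eq_top_of_isUnit_mem _ ha₀ isUnit_one)
    · exact h1
  set F : R[X] := f.comp (X + C a₀) with hFdef
  have hF : F.Monic := hf.comp_X_add_C a₀
  have hFdeg : F.natDegree = n := by
    rw [hFdef, natDegree_comp]
    simp [hn]
  set c : ℕ → R := fun k => F.coeff k with hcdef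
  have hc0eval : c 0 = f.eval a₀ := by
    rw [hcdef]
    simp only [coeff_zero_eq_eval_zero, hFdef, eval_comp]
    simp
  have hc0 : c 0 ∈ IsLocalRing.maximalIdeal R := hc0eval ▸ ha₀
  have hc1 : c 1 = f.derivative.eval a₀ := by
    have h1 := coeff_derivative F 0
    have h2 : F.derivative.eval 0 = f.derivative.eval a₀ := by
      rw [hFdef, derivative_comp]
      simp
    rw [coeff_zero_eq_eval_zero, h2] at h1
    simpa using h1.symm
  obtain ⟨U, hU⟩ := hu
  have hcU : c 1 = ↑U := by rw [hc1, hU]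
  by_cases hc0z : c 0 = 0
  · rw [hc0eval] at hc0z
    exact ⟨a₀, hc0z, by simp⟩
  -- target coefficients
  set D : ℕ → R := fun k => if k = 0 then 1 else c k * (c 0) ^ (k - 1) * (-(↑U⁻¹ : R)) ^ k with hD
  have hD1 : D 1 = -1 := by
    rw [hD]
    simp only [if_neg one_ne_zero, pow_one, Nat.sub_self, pow_zero, mul_one, hcU]
    rw [mul_neg, Units.mul_inv]
  have hzex : ∀ k, 2 ≤ k → k ≤ n → ∃ z ∈ p, φ z = D k := by
    intro k h2 hk
    apply hsurj
    have hpow : (c 0) ^ (k - 1) ∈ IsLocalRing.maximalIdeal R := by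
      have : c 0 ^ (k - 1) = c 0 * c 0 ^ (k - 2) := by
        rw [← pow_succ']
        congr 1
        omega
      rw [this]
      exact Ideal.mul_mem_right _ _ hc0
    rw [hD]
    simp only [if_neg (by omega : ¬ k = 0)]
    exact Ideal.mul_mem_right _ _ (Ideal.mul_mem_left _ _ hpow)
  set z : ℕ → O := fun k => if h : 2 ≤ k ∧ k ≤ n then (hzex k h.1 h.2).choose
    else if k = 0 then 1 else -1 with hzdef
  have hz0 : z 0 = 1 := by rw [hzdef]; norm_num
  have hz1 : z 1 = -1 := by rw [hzdef]; norm_num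
  have hzp : ∀ k, 2 ≤ k → k ≤ n → z k ∈ p := by
    intro k h2 hk
    rw [hzdef]
    simp only [dif_pos (⟨h2, hk⟩ : 2 ≤ k ∧ k ≤ n)]
    exact (hzex k h2 hk).choose_spec.1
  have hzD : ∀ k, k ≤ n → φ (z k) = D k := by
    intro k hk
    rcases Nat.lt_or_ge k 2 with hk2 | hk2
    · interval_cases k
      · rw [hz0, map_one, hD]
        simp
      · rw [hz1, hD1, map_neg, map_one]
    · rw [hzdef]
      simp only [dif_pos (⟨hk2, hk⟩ : 2 ≤ k ∧ k ≤ n)]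
      exact (hzex k hk2 hk).choose_spec.2
  set q : O[X] := ∑ k ∈ Finset.range (n + 1), C (z k) * X ^ (n - k) with hqdef
  have hqeval : ∀ x : O, q.eval x = ∑ k ∈ Finset.range (n + 1), z k * x ^ (n - k) := by
    intro x
    rw [hqdef, eval_finset_sum]
    simp
  have hqdeg : q.natDegree ≤ n := by
    apply natDegree_sum_le_of_forall_le
    intro k hk
    refine (natDegree_C_mul_le _ _).trans ?_
    rw [natDegree_X_pow]
    omega
  have hqn : q.coeff n = 1 := by
    rw [hqdef, finset_sum_coeff]
    have : ∀ k ∈ Finset.range (n + 1), k ≠ 0 → (C (z k) * X ^ (n - k)).coeff n = 0 := by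
      intro k hk hk0
      rw [coeff_C_mul, coeff_X_pow, if_neg (by simp at hk; omega), mul_zero]
    rw [Finset.sum_eq_single 0 this (by simp)]
    rw [coeff_C_mul, coeff_X_pow]
    simp [hz0]
  have hq : q.Monic := monic_of_natDegree_le_of_coeff_eq_one n hqdeg hqn
  -- splitting sums
  have hsplit : ∀ g : ℕ → O, ∑ k ∈ Finset.range (n + 1), g k
      = g 0 + g 1 + ∑ k ∈ Finset.Ico 2 (n + 1), g k := by
    intro g
    rw [Finset.range_eq_Ico, ← Finset.sum_Ico_consecutive _ (by omega : 0 ≤ 2) (by omega : 2 ≤ n + 1)]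
    congr 1
    show ∑ k ∈ Finset.range 2, g k = g 0 + g 1
    rw [Finset.sum_range_succ, Finset.sum_range_one]
  have hqe1 : q.eval 1 ∈ p := by
    rw [hqeval, hsplit]
    have : z 0 * 1 ^ (n - 0) + z 1 * 1 ^ (n - 1) = 0 := by
      rw [hz0, hz1]; ring
    rw [this, zero_add]
    exact Ideal.sum_mem _ (fun k hk => by
      simp only [Finset.mem_Ico] at hk
      exact Ideal.mul_mem_right _ _ (hzp k hk.1 (by omega)))
  have hplem : p ≤ IsLocalRing.maximalIdeal O := IsLocalRing.le_maximalIdeal hp.ne_top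
  have hqd1 : IsUnit (q.derivative.eval 1) := by
    have hDeval : q.derivative.eval 1 = ∑ k ∈ Finset.range (n + 1), z k * (n - k : ℕ) := by
      rw [hqdef, derivative_sum, eval_finset_sum]
      congr 1
      ext k
      rw [derivative_C_mul_X_pow]
      simp
    have hmem1 : q.derivative.eval 1 - 1 ∈ IsLocalRing.maximalIdeal O := by
      rw [hDeval, hsplit]
      have h01 : z 0 * ((n - 0 : ℕ) : O) + z 1 * ((n - 1 : ℕ) : O) = 1 := by
        rw [hz0, hz1, Nat.sub_zero, Nat.cast_sub hn1]
        push_cast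
        ring
      rw [h01, add_sub_cancel_left]
      refine hplem (Ideal.sum_mem _ (fun k hk => ?_))
      simp only [Finset.mem_Ico] at hk
      exact Ideal.mul_mem_right _ _ (hzp k hk.1 (by omega))
    by_contra hne
    have h6 : q.derivative.eval 1 ∈ IsLocalRing.maximalIdeal O :=
      (IsLocalRing.mem_maximalIdeal _).mpr hne
    have h7 : (1 : O) ∈ IsLocalRing.maximalIdeal O := by
      have h8 := Ideal.sub_mem _ h6 hmem1
      simpa using h8
    exact (IsLocalRing.maximalIdeal.isMaximal O).ne_top
      (Ideal.eq_top_of_isUnit_mem _ h7 isUnit_one)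
  obtain ⟨w, hwroot, hwsub⟩ := HenselianLocalRing.is_henselian q hq 1 (hplem hqe1) hqd1
  have hwp : w ∉ p := by
    intro hwmem
    have h1m : (1 : O) ∈ IsLocalRing.maximalIdeal O := by
      have h9 := Ideal.sub_mem _ (hplem hwmem) hwsub
      simpa using h9
    exact (IsLocalRing.maximalIdeal.isMaximal O).ne_top
      (Ideal.eq_top_of_isUnit_mem _ h1m isUnit_one)
  have hVu : IsUnit (φ w) := IsLocalization.map_units (M := p.primeCompl) R ⟨w, hwp⟩
  obtain ⟨V, hV⟩ := hVu
  set S : Rˣ := -(U * V) with hSdef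
  have hS : (S : R) = -(↑U : R) * φ w := by
    rw [hSdef, Units.val_neg, Units.val_mul, hV, neg_mul]
  have hq0 : φ (q.eval w) = 0 := by
    rw [show q.eval w = 0 from hwroot, map_zero]
  have hQeval : φ (q.eval w) = ∑ k ∈ Finset.range (n + 1), D k * (φ w) ^ (n - k) := by
    rw [hqeval, map_sum]
    refine Finset.sum_congr rfl (fun k hk => ?_)
    simp only [Finset.mem_range] at hk
    rw [map_mul, map_pow, hzD k (by omega)]
  have key : F.eval (c 0 * ↑S⁻¹) * (↑S : R) ^ n
      = ((-(↑U : R)) ^ n * c 0) * ∑ k ∈ Finset.range (n + 1), D k * (φ w) ^ (n - k) := by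
    have hFe : F.eval (c 0 * ↑S⁻¹) = ∑ k ∈ Finset.range (n + 1), c k * (c 0 * ↑S⁻¹) ^ k := by
      have h10 := eval_eq_sum_range (p := F) (c 0 * (↑S⁻¹ : R))
      rwa [hFdeg] at h10
    rw [hFe, Finset.sum_mul, Finset.mul_sum]
    refine Finset.sum_congr rfl (fun k hk => ?_)
    simp only [Finset.mem_range] at hk
    obtain ⟨m, hm⟩ : ∃ m, n = k + m := ⟨n - k, by omega⟩
    rw [hm]
    rcases Nat.eq_zero_or_pos k with rfl | hk1
    · have hD0 : D 0 = 1 := by rw [hD]; simp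
      rw [hD0]
      simp only [pow_zero, mul_one, one_mul, zero_add, Nat.sub_zero]
      rw [hS, mul_pow]
      ring
    · have hDk : D k = c k * c 0 ^ (k - 1) * (-(↑U⁻¹ : R)) ^ k := by
        rw [hD]
        simp only [if_neg (by omega : ¬ k = 0)]
      rw [hDk, Nat.add_sub_cancel_left]
      have f4 : c 0 ^ (k - 1) * c 0 = c 0 ^ k := by
        conv_rhs => rw [show k = (k - 1) + 1 by omega]
        rw [pow_succ]
      have f5 : ((-(↑U : R)) ^ k) * ((-(↑U⁻¹ : R)) ^ k) = 1 := by
        rw [← mul_pow, neg_mul_neg, Units.mul_inv, one_pow]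
      have hL : c k * (c 0 * (↑S⁻¹ : R)) ^ k * (↑S : R) ^ (k + m)
          = c k * c 0 ^ k * ((-(↑U : R)) ^ m * (φ w) ^ m) := by
        calc c k * (c 0 * (↑S⁻¹ : R)) ^ k * (↑S : R) ^ (k + m)
            = c k * c 0 ^ k * (((↑S⁻¹ : R) * ↑S) ^ k) * (↑S : R) ^ m := by
              rw [mul_pow, mul_pow, pow_add]; ring
          _ = c k * c 0 ^ k * ((-(↑U : R) * φ w)) ^ m := by
              rw [Units.inv_mul, one_pow, mul_one, hS]
          _ = c k * c 0 ^ k * ((-(↑U : R)) ^ m * (φ w) ^ m) := by rw [mul_pow]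
      have hRt : ((-(↑U : R)) ^ (k + m) * c 0) * ((c k * c 0 ^ (k - 1) * (-(↑U⁻¹ : R)) ^ k) * (φ w) ^ m)
          = c k * c 0 ^ k * ((-(↑U : R)) ^ m * (φ w) ^ m) := by
        calc ((-(↑U : R)) ^ (k + m) * c 0) * ((c k * c 0 ^ (k - 1) * (-(↑U⁻¹ : R)) ^ k) * (φ w) ^ m)
            = c k * (c 0 ^ (k - 1) * c 0) * (((-(↑U : R)) ^ k) * ((-(↑U⁻¹ : R)) ^ k))
              * ((-(↑U : R)) ^ m * (φ w) ^ m) := by rw [pow_add]; ring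
          _ = c k * c 0 ^ k * ((-(↑U : R)) ^ m * (φ w) ^ m) := by rw [f4, f5, mul_one]
      exact hL.trans hRt.symm
  have hzero : F.eval (c 0 * ↑S⁻¹) * (↑S : R) ^ n = 0 := by
    rw [key, ← hQeval, hq0, mul_zero]
  have hSn : ((↑S : R) ^ n) ≠ 0 := (S.isUnit.pow n).ne_zero
  have hF0 : F.eval (c 0 * (↑S⁻¹ : R)) = 0 := by
    rcases mul_eq_zero.mp hzero with h | h
    · exact h
    · exact absurd h hSn
  refine ⟨a₀ + c 0 * ↑S⁻¹, ?_, ?_⟩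
  · rw [hFdef, eval_comp] at hF0
    show f.eval (a₀ + c 0 * ↑S⁻¹) = 0
    rw [add_comm]
    simpa using hF0
  · have h11 : a₀ + c 0 * (↑S⁻¹ : R) - a₀ = c 0 * ↑S⁻¹ := by ring
    rw [h11]
    exact Ideal.mul_mem_right _ _ hc0

theorem my_henselian_of_ringEquiv {A B : Type*} [CommRing A] [CommRing B]
    [HenselianLocalRing A] (e : A ≃+* B) : HenselianLocalRing B := by
  haveI : Nontrivial B := e.symm.toEquiv.nontrivial
  haveI : IsLocalRing B := e.isLocalRing
  refine ⟨fun f hf a₀ ha₀ hu => ?_⟩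
  have key : ∀ (g : B[X]) (x : B), (g.map (e.symm : B →+* A)).eval (e.symm x) = e.symm (g.eval x) := by
    intro g x
    rw [eval_map]
    exact eval₂_at_apply (e.symm : B →+* A) x
  have cond1 : (f.map (e.symm : B →+* A)).eval (e.symm a₀) ∈ IsLocalRing.maximalIdeal A := by
    rw [key, IsLocalRing.mem_maximalIdeal, mem_nonunits_iff]
    intro h
    have h5 := h.map (e : A →+* B)
    simp only [RingEquiv.coe_toRingHom, RingEquiv.apply_symm_apply] at h5
    exact (IsLocalRing.mem_maximalIdeal _).mp ha₀ h5
  have cond2 : IsUnit ((f.map (e.symm : B →+* A)).derivative.eval (e.symm a₀)) := by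
    rw [derivative_map, key]
    exact hu.map (e.symm : B →+* A)
  obtain ⟨b, hb, hb'⟩ := HenselianLocalRing.is_henselian (f.map (e.symm : B →+* A))
    (hf.map _) (e.symm a₀) cond1 cond2
  refine ⟨e b, ?_, ?_⟩
  · have h2 : ((f.map (e.symm : B →+* A)).map (e : A →+* B)).eval (e b)
        = e ((f.map (e.symm : B →+* A)).eval b) := by
      rw [eval_map]
      exact eval₂_at_apply (e : A →+* B) b
    rw [map_map] at h2
    simp at h2
    rw [Polynomial.IsRoot, h2, hb, map_zero]
  · have h3 : e b - a₀ = e (b - e.symm a₀) := by simp [map_sub]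
    rw [h3, IsLocalRing.mem_maximalIdeal, mem_nonunits_iff]
    intro h
    have h4 := h.map (e.symm : B →+* A)
    simp only [RingEquiv.coe_toRingHom, RingEquiv.symm_apply_apply] at h4
    exact (IsLocalRing.mem_maximalIdeal _).mp hb' h4

/-- if `O` is a henselian valuation ring and `p` a prime ideal of `O`, then
the localization `O_p` is a henselian local ring; in particular every stalk of the
structure sheaf of `Spec O` is a henselian local ring. -/
theorem henselian_valuationRing_isLocallyHenselian
    (O : Type u) [CommRing O] [IsDomain O] [ValuationRing O] [HenselianLocalRing O]
    (p : Ideal O) [p.IsPrime] :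
    HenselianLocalRing (Localization.AtPrime p) ∧
      ∀ s : PrimeSpectrum O,
        HenselianLocalRing ((Spec (CommRingCat.of O)).presheaf.stalk s) := by
  refine ⟨my_henselian_localization O p, fun s => ?_⟩
  haveI := s.2
  haveI : HenselianLocalRing (CommRingCat.of (Localization.AtPrime s.asIdeal)) :=
    my_henselian_localization O s.asIdeal
  exact my_henselian_of_ringEquiv
    (IsLocalization.algEquiv s.asIdeal.primeCompl (Localization.AtPrime s.asIdeal) ((Spec.structureSheaf O).presheaf.stalk s)).toRingEquiv
end

section
/- Let O be a valuation ring and let U be a nonempty open subset of the prime spectrum Spec O. Then the following are equivalent: (1) U contains a greatest element with respect to inclusion of prime ideals (so the corresponding open subscheme is a local scheme); (2) U is an affine open of the scheme Spec O; (3) U is quasi-compact; (4) U = D(f), the basic open set of some nonzero f ∈ O; (5) there exists a prime ideal p of O such that U = { q ∈ Spec O : q ⊆ p }. -/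
open AlgebraicGeometry TopologicalSpace

universe u

section Aux

variable {O : Type u} [CommRing O] [IsDomain O] [ValuationRing O]

omit [IsDomain O] [ValuationRing O] in
/-- Opens of the prime spectrum are downward closed. -/
lemma mem_opens_of_le {U : Opens (PrimeSpectrum O)} {p q : PrimeSpectrum O}
    (hp : p ∈ U) (h : q.asIdeal ≤ p.asIdeal) : q ∈ U :=
  ((PrimeSpectrum.le_iff_specializes q p).mp h).mem_open U.isOpen hp

omit [IsDomain O] [ValuationRing O] in
lemma exists_basicOpen_le {U : Opens (PrimeSpectrum O)} {p : PrimeSpectrum O} (hp : p ∈ U) :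
    ∃ f : O, p ∈ PrimeSpectrum.basicOpen f ∧ PrimeSpectrum.basicOpen f ≤ U := by
  obtain ⟨v, ⟨f, rfl⟩, hpf, hfU⟩ :=
    PrimeSpectrum.isTopologicalBasis_basic_opens.exists_subset_of_mem_open hp U.isOpen
  exact ⟨f, hpf, hfU⟩

end Aux

/-- for a nonempty open subset `U` of the prime spectrum of a valuation
ring `O`, the following are equivalent: (1) `U` has a greatest element (so the
corresponding open subscheme is local); (2) `U` is an affine open of `Spec O`;
(3) `U` is quasi-compact; (4) `U` is a basic open `D(f)` for some nonzero `f`;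
(5) `U = {q | q ⊆ p}` for some prime `p`. -/
theorem valuationRing_opens_tfae
    (O : Type u) [CommRing O] [IsDomain O] [ValuationRing O]
    (U : Opens (PrimeSpectrum O)) (hU : (U : Set (PrimeSpectrum O)).Nonempty) :
    List.TFAE
      [ ∃ p ∈ U, ∀ q ∈ U, q.asIdeal ≤ p.asIdeal,
        IsAffineOpen (X := Spec (CommRingCat.of O)) U,
        IsCompact (U : Set (PrimeSpectrum O)),
        ∃ f : O, f ≠ 0 ∧ U = PrimeSpectrum.basicOpen f,
        ∃ p : PrimeSpectrum O,
          (U : Set (PrimeSpectrum O)) = {q : PrimeSpectrum O | q.asIdeal ≤ p.asIdeal} ] := by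
  tfae_have 1 → 5 := by
    rintro ⟨p, hp, hmax⟩
    refine ⟨p, Set.ext fun q => ⟨fun hq => hmax q hq, fun hq => mem_opens_of_le hp hq⟩⟩
  tfae_have 5 → 4 := by
    rintro ⟨p, hp⟩
    have hpU : p ∈ U := by
      show p ∈ (U : Set (PrimeSpectrum O))
      rw [hp]
      exact Set.mem_setOf.mpr (le_refl p.asIdeal)
    obtain ⟨f, hpf, hfU⟩ := exists_basicOpen_le hpU
    have hf0 : f ≠ 0 := fun h => hpf (h ▸ p.asIdeal.zero_mem)
    refine ⟨f, hf0, le_antisymm ?_ hfU⟩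
    intro q hq
    have hqp : q.asIdeal ≤ p.asIdeal := by rw [Set.ext_iff] at hp; exact (hp q).mp hq
    exact fun hfq => hpf (hqp hfq)
  tfae_have 4 → 2 := by
    rintro ⟨f, -, rfl⟩
    exact IsAffineOpen.Spec_basicOpen (R := CommRingCat.of O) f
  tfae_have 2 → 3 := fun h => h.isCompact
  tfae_have 3 → 4 := by
    intro hc
    set ι := {f : O // PrimeSpectrum.basicOpen f ≤ U} with hι
    have hne : Nonempty ι := by
      obtain ⟨x, hx⟩ := hU
      obtain ⟨f, -, hfU⟩ := exists_basicOpen_le hx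
      exact ⟨⟨f, hfU⟩⟩
    have hdir : Directed (· ⊆ ·)
        (fun i : ι => (PrimeSpectrum.basicOpen i.1 : Set (PrimeSpectrum O))) := by
      rintro ⟨a, ha⟩ ⟨b, hb⟩
      obtain ⟨c, hc | hc⟩ := ValuationRing.cond a b
      · refine ⟨⟨a, ha⟩, le_refl _, ?_⟩
        have h2 := PrimeSpectrum.basicOpen_mul_le_left a c
        rw [hc] at h2
        exact SetLike.coe_subset_coe.mpr h2
      · refine ⟨⟨b, hb⟩, ?_, le_refl _⟩
        have h2 := PrimeSpectrum.basicOpen_mul_le_left b c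
        rw [hc] at h2
        exact SetLike.coe_subset_coe.mpr h2
    have hcov : (U : Set (PrimeSpectrum O)) ⊆
        ⋃ i : ι, (PrimeSpectrum.basicOpen i.1 : Set (PrimeSpectrum O)) := by
      intro x hx
      obtain ⟨f, hxf, hfU⟩ := exists_basicOpen_le hx
      exact Set.mem_iUnion.mpr ⟨⟨f, hfU⟩, hxf⟩
    obtain ⟨⟨f, hfU⟩, hUf⟩ := hc.elim_directed_cover
      (fun i : ι => (PrimeSpectrum.basicOpen i.1 : Set (PrimeSpectrum O)))
      (fun i => (PrimeSpectrum.basicOpen i.1).isOpen) hcov hdir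
    have hf0 : f ≠ 0 := by
      rintro rfl
      obtain ⟨x, hx⟩ := hU
      simpa using hUf hx
    exact ⟨f, hf0, le_antisymm hUf hfU⟩
  tfae_have 4 → 1 := by
    rintro ⟨f, hf0, rfl⟩
    obtain ⟨q₀, hq₀⟩ := hU
    have hq₀' : f ∉ q₀.asIdeal := hq₀
    have htot : ∀ q q' : PrimeSpectrum O, q.asIdeal ≤ q'.asIdeal ∨ q'.asIdeal ≤ q.asIdeal :=
      fun q q' => Std.Total.total q.asIdeal q'.asIdeal
    let P : Ideal O :=
      { carrier := {x | ∃ q : PrimeSpectrum O, f ∉ q.asIdeal ∧ x ∈ q.asIdeal}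
        zero_mem' := ⟨q₀, hq₀', q₀.asIdeal.zero_mem⟩
        add_mem' := by
          rintro x y ⟨q1, h1, hx⟩ ⟨q2, h2, hy⟩
          rcases htot q1 q2 with h | h
          · exact ⟨q2, h2, q2.asIdeal.add_mem (h hx) hy⟩
          · exact ⟨q1, h1, q1.asIdeal.add_mem hx (h hy)⟩
        smul_mem' := by
          rintro c x ⟨q, h, hx⟩
          exact ⟨q, h, q.asIdeal.mul_mem_left c hx⟩ }
    have hfP : f ∉ P := by rintro ⟨q, hq, hfq⟩; exact hq hfq
    have hP : P.IsPrime := by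
      refine ⟨fun h => hfP (h ▸ Submodule.mem_top), ?_⟩
      rintro x y ⟨q, hq, hxy⟩
      rcases q.isPrime.mem_or_mem hxy with h | h
      · exact Or.inl ⟨q, hq, h⟩
      · exact Or.inr ⟨q, hq, h⟩
    refine ⟨⟨P, hP⟩, hfP, ?_⟩
    intro q hq x hx
    exact ⟨q, hq, hx⟩
  tfae_finish
end

section
/- Let O be a valuation ring and let Z be a nonempty closed subset of the prime spectrum Spec O. Then Z is irreducible; more precisely, p = ⋂_{q ∈ Z} q is a prime ideal belonging to Z, Z equals the vanishing set V(p) = { q ∈ Spec O : p ⊆ q }, and p is a generic point of Z (Z is the closure of {p}). -/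
universe u

/-- a nonempty closed subset `Z` of the prime spectrum of a valuation ring
is irreducible; more precisely `p = ⋂_{q ∈ Z} q` is a prime ideal belonging to `Z`,
`Z = V(p)` and `p` is a generic point of `Z`. -/
theorem valuationRing_closed_subset_irreducible
    (O : Type u) [CommRing O] [IsDomain O] [ValuationRing O]
    (Z : Set (PrimeSpectrum O)) (hZ : IsClosed Z) (hZne : Z.Nonempty) :
    IsIrreducible Z ∧
      ∃ p : PrimeSpectrum O,
        (p.asIdeal : Set O) = ⋂ q ∈ Z, (q.asIdeal : Set O) ∧
        p ∈ Z ∧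
        Z = PrimeSpectrum.zeroLocus (p.asIdeal : Set O) ∧
        IsGenericPoint p Z := by
  -- the vanishing ideal of `Z`
  set I := PrimeSpectrum.vanishingIdeal Z with hI
  have hIsInf : I = sInf (PrimeSpectrum.asIdeal '' Z) := by
    rw [hI, PrimeSpectrum.vanishingIdeal, ← sInf_image]
  have hprime : I.IsPrime := by
    rw [hIsInf]
    refine Ideal.sInf_isPrime_of_isChain (hZne.image _) ?_ ?_
    · intro a _ b _ _
      exact (@Std.Total.total _ LE.le (ValuationRing.le_total_ideal O) a b).imp id id
    · rintro p ⟨q, -, rfl⟩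
      exact q.isPrime
  set p : PrimeSpectrum O := ⟨I, hprime⟩ with hp
  have hZeq : Z = PrimeSpectrum.zeroLocus (I : Set O) := by
    conv_lhs => rw [← hZ.closure_eq, ← PrimeSpectrum.zeroLocus_vanishingIdeal_eq_closure]
  have hpZ : p ∈ Z := by
    rw [hZeq]
    exact fun x hx => hx
  have hgen : IsGenericPoint p Z := by
    rw [IsGenericPoint, ← PrimeSpectrum.zeroLocus_vanishingIdeal_eq_closure,
      PrimeSpectrum.vanishingIdeal_singleton, hZeq]
  have hcoe : (p.asIdeal : Set O) = ⋂ q ∈ Z, (q.asIdeal : Set O) := by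
    ext f
    simp [hp, hI, PrimeSpectrum.mem_vanishingIdeal]
  refine ⟨?_, p, hcoe, hpZ, hZeq, hgen⟩
  rw [← hgen]
  exact isIrreducible_iff_closure.mpr isIrreducible_singleton
end

section
/- Let T be an irreducible quasi-sober topological space with generic point η, let G be a group, and let D be a sheaf of G-sets on T. Then the following are equivalent: (a) for all nonempty open subsets V ⊆ U, the restriction map D(U) → D(V) is injective on orbits; (b) for every open U and every s ∈ U, the germ map D(U) → D_s is injective on orbits; (c) for every nonempty open U, the germ map D(U) → D_η is injective on orbits; (d) for every point s ∈ T, the canonical map D_s → D_η is injective on orbits; (e) for every pair of points s, s' ∈ T with s in the closure of {s'}, the canonical map D_s → D_{s'} is injective on orbits. -/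
open CategoryTheory TopologicalSpace Opposite

universe u

/-- let `D` be a sheaf of `G`-sets on an irreducible quasi-sober space `T`
with generic point `η`; the `G`-action is encoded by a morphism of monoids
`ρ : G →* End D.val`, i.e. an action of `G` on each set of sections commuting with all
restriction maps (so that all restriction maps and hence also all germ and stalk maps
are `G`-equivariant).  Then the following are equivalent: (a) restriction maps to
nonempty opens are injective on orbits; (b) all germ maps are injective on orbits;
(c) germ maps at the generic point are injective on orbits (on nonempty opens);
(d) all stalk maps `D_s → D_η` are injective on orbits; (e) all specialization maps
between stalks are injective on orbits. -/
theorem sheaf_of_G_sets_injective_on_orbits_tfae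
    {T : TopCat.{u}} [IrreducibleSpace T] [QuasiSober T]
    (η : T) (hη : IsGenericPoint η (Set.univ : Set T))
    (G : Type u) [Group G]
    (D : TopCat.Sheaf (Type u) T) (ρ : G →* CategoryTheory.End D.val) :
    List.TFAE
      [ ∀ (U V : Opens T) (h : V ≤ U), (V : Set T).Nonempty →
          ∀ (d : D.val.obj (op U)) (g : G),
            D.val.map (homOfLE h).op ((ρ g).app (op U) d) = D.val.map (homOfLE h).op d →
              (ρ g).app (op U) d = d,
        ∀ (U : Opens T) (s : T) (hs : s ∈ U),
          ∀ (d : D.val.obj (op U)) (g : G),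
            D.presheaf.germ U s hs ((ρ g).app (op U) d) = D.presheaf.germ U s hs d →
              (ρ g).app (op U) d = d,
        ∀ (U : Opens T), (U : Set T).Nonempty → ∀ (hη' : η ∈ U),
          ∀ (d : D.val.obj (op U)) (g : G),
            D.presheaf.germ U η hη' ((ρ g).app (op U) d) = D.presheaf.germ U η hη' d →
              (ρ g).app (op U) d = d,
        ∀ (s : T) (h : η ⤳ s),
          ∀ (x : D.presheaf.stalk s) (g : G),
            D.presheaf.stalkSpecializes h
                ((TopCat.Presheaf.stalkFunctor (Type u) s).map (ρ g) x) =
              D.presheaf.stalkSpecializes h x →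
              (TopCat.Presheaf.stalkFunctor (Type u) s).map (ρ g) x = x,
        ∀ (s s' : T) (h : s' ⤳ s),
          ∀ (x : D.presheaf.stalk s) (g : G),
            D.presheaf.stalkSpecializes h
                ((TopCat.Presheaf.stalkFunctor (Type u) s).map (ρ g) x) =
              D.presheaf.stalkSpecializes h x →
              (TopCat.Presheaf.stalkFunctor (Type u) s).map (ρ g) x = x ] := by
  -- η belongs to every nonempty open set
  have hmem : ∀ (U : Opens T), (U : Set T).Nonempty → η ∈ U := by
    rintro U ⟨x, hx⟩
    have hxc : x ∈ closure ({η} : Set T) := by rw [hη]; trivial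
    obtain ⟨y, hyU, hy⟩ := mem_closure_iff.mp hxc U U.isOpen hx
    rw [Set.mem_singleton_iff] at hy
    rwa [← hy]
  have hspec : ∀ s : T, η ⤳ s := fun s => hη.specializes trivial
  tfae_have 1 → 2 := by
    intro H U s hs d g hgerm
    obtain ⟨W, hw, iU, iU', heq⟩ :=
      D.presheaf.germ_eq s hs hs ((ρ g).app (op U) d) d hgerm
    have h1 : iU = homOfLE (leOfHom iU) := Subsingleton.elim _ _
    have h2 : iU' = homOfLE (leOfHom iU) := Subsingleton.elim _ _
    rw [h1, h2] at heq
    exact H U W (leOfHom iU) ⟨s, hw⟩ d g heq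
  tfae_have 2 → 3 := by
    intro H U _ hη' d g hgerm
    exact H U η hη' d g hgerm
  have germ_nat : ∀ (g : G) (U : Opens T) (x : T) (hx : x ∈ U) (a : D.val.obj (op U)),
      (TopCat.Presheaf.stalkFunctor (Type u) x).map (ρ g) (D.presheaf.germ U x hx a)
        = D.presheaf.germ U x hx ((ρ g).app (op U) a) := fun g U x hx a =>
    TopCat.Presheaf.stalkFunctor_map_germ_apply (F := D.presheaf) U x hx (ρ g) a
  have germ_spec : ∀ (U : Opens T) (y : T) (hy : y ∈ U) (x : T) (h : x ⤳ y)
      (a : D.val.obj (op U)),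
      D.presheaf.stalkSpecializes h (D.presheaf.germ U y hy a)
        = D.presheaf.germ U x (h.mem_open U.isOpen hy) a := fun U y hy x h a =>
    ConcreteCategory.congr_hom (TopCat.Presheaf.germ_stalkSpecializes D.presheaf hy h) a
  tfae_have 3 → 4 := by
    intro H s h x g hx
    obtain ⟨U, hsU, d, rfl⟩ := D.presheaf.germ_exist (x := s) x
    have h1 := germ_spec U s hsU η h ((ρ g).app (op U) d)
    have h2 := germ_spec U s hsU η h d
    have h3 := congrArg (D.presheaf.stalkSpecializes h) (germ_nat g U s hsU d)
    have h' : D.presheaf.germ U η (h.mem_open U.isOpen hsU) ((ρ g).app (op U) d)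
        = D.presheaf.germ U η (h.mem_open U.isOpen hsU) d :=
      h1.symm.trans (h3.symm.trans (hx.trans h2))
    exact (germ_nat g U s hsU d).trans
      (congrArg (D.presheaf.germ U s hsU) (H U ⟨s, hsU⟩ (h.mem_open U.isOpen hsU) d g h'))
  tfae_have 4 → 5 := by
    intro H s s' h x g hx
    apply H s (hspec s) x g
    have h' : η ⤳ s' := hspec s'
    have := congrArg (D.presheaf.stalkSpecializes h') hx
    rw [← CategoryTheory.comp_apply (D.presheaf.stalkSpecializes h) (D.presheaf.stalkSpecializes h'),
      ← CategoryTheory.comp_apply (D.presheaf.stalkSpecializes h) (D.presheaf.stalkSpecializes h')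
        ((TopCat.Presheaf.stalkFunctor (Type u) s).map (ρ g) x),
      TopCat.Presheaf.stalkSpecializes_comp] at this
    exact this
  tfae_have 5 → 1 := by
    intro H U V hVU hV d g heq
    have hηV : η ∈ V := hmem V hV
    have hηU : η ∈ U := hVU hηV
    -- germs at η agree
    have hgermη : D.presheaf.germ U η hηU ((ρ g).app (op U) d) = D.presheaf.germ U η hηU d := by
      have h1 := congrArg (D.presheaf.germ V η hηV) heq
      have h2 : ∀ (a : D.val.obj (op U)),
          D.presheaf.germ V η hηV (D.val.map (homOfLE hVU).op a)
            = D.presheaf.germ U η hηU a := fun a =>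
        ConcreteCategory.congr_hom (TopCat.Presheaf.germ_res D.presheaf (homOfLE hVU) η hηV) a
      rw [h2, h2] at h1
      exact h1
    apply TopCat.Presheaf.section_ext D
    intro s hs
    have hsp : η ⤳ s := hspec s
    have hgermη' : D.presheaf.germ U η (hsp.mem_open U.isOpen hs) ((ρ g).app (op U) d)
        = D.presheaf.germ U η (hsp.mem_open U.isOpen hs) d := hgermη
    have key_in : D.presheaf.stalkSpecializes hsp
        ((TopCat.Presheaf.stalkFunctor (Type u) s).map (ρ g) (D.presheaf.germ U s hs d))
          = D.presheaf.stalkSpecializes hsp (D.presheaf.germ U s hs d) :=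
      (congrArg (D.presheaf.stalkSpecializes hsp) (germ_nat g U s hs d)).trans
        ((germ_spec U s hs η hsp ((ρ g).app (op U) d)).trans
          (hgermη'.trans (germ_spec U s hs η hsp d).symm))
    exact (germ_nat g U s hs d).symm.trans (H s η hsp (D.presheaf.germ U s hs d) g key_in)
  tfae_finish
end

section
/- Let G be a profinite group (a compact Hausdorff totally disconnected topological group), let T be a topological space, and let D be a sheaf of G-sets on T such that for every open U the G-set D(U) is smooth. Consider the set of pairs (U, γ) where U is a nonempty open subset of T and γ ⊆ D(U) is a G-orbit, partially ordered by: (U, γ) ≤ (U', γ') if and only if U ⊆ U' and γ is the image of γ' under the restriction map D(U') → D(U). Then every such pair (U, γ) admits a majorant that is a maximal element of this partially ordered set. -/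
open CategoryTheory TopologicalSpace Opposite

universe u

/-- A pair `(U, γ)` consisting of a nonempty open subset `U` of `T` and a `G`-orbit
`γ ⊆ D(U)`, for a sheaf of `G`-sets `D` on `T` whose `G`-action is encoded by
`ρ : G →* End D.val`. -/
structure OrbitPair {T : TopCat.{u}} (G : Type u) [Group G]
    (D : TopCat.Sheaf (Type u) T) (ρ : G →* CategoryTheory.End D.val) where
  U : Opens T
  hU : (U : Set T).Nonempty
  γ : Set (D.val.obj (op U))
  isOrbit : ∃ d : D.val.obj (op U), γ = Set.range fun g : G => (ρ g).app (op U) d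

/-- The partial order on such pairs: `(U, γ) ≤ (U', γ')` iff `U ⊆ U'` and `γ` is the
image of `γ'` under the restriction map `D(U') → D(U)`. -/
def OrbitPair.le {T : TopCat.{u}} {G : Type u} [Group G]
    {D : TopCat.Sheaf (Type u) T} {ρ : G →* CategoryTheory.End D.val}
    (P Q : OrbitPair G D ρ) : Prop :=
  ∃ h : P.U ≤ Q.U, P.γ = D.val.map (homOfLE h).op '' Q.γ

section Aux

variable {T : TopCat.{u}} {G : Type u} [Group G]
    {D : TopCat.Sheaf (Type u) T} {ρ : G →* CategoryTheory.End D.val}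

lemma OrbitPairAux.app_one (X : (Opens T)ᵒᵖ) (d : D.val.obj X) : (ρ 1).app X d = d := by
  rw [map_one]; rfl

lemma OrbitPairAux.app_mul (a b : G) (X : (Opens T)ᵒᵖ) (d : D.val.obj X) :
    (ρ (a * b)).app X d = (ρ a).app X ((ρ b).app X d) := by
  rw [map_mul]; rfl

lemma OrbitPairAux.app_nat (g : G) {X Y : (Opens T)ᵒᵖ} (f : X ⟶ Y) (d : D.val.obj X) :
    D.val.map f ((ρ g).app X d) = (ρ g).app Y (D.val.map f d) :=
  (NatTrans.naturality_apply (ρ g) f d).symm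

open OrbitPairAux

lemma OrbitPairAux.orbit_eq_of_mem {X : (Opens T)ᵒᵖ} {d x : D.val.obj X}
    (hx : x ∈ Set.range fun g : G => (ρ g).app X d) :
    (Set.range fun g : G => (ρ g).app X x) = Set.range fun g : G => (ρ g).app X d := by
  obtain ⟨g₀, rfl⟩ := hx
  ext y
  simp only [Set.mem_range]
  constructor
  · rintro ⟨g, rfl⟩; exact ⟨g * g₀, app_mul g g₀ X d⟩
  · rintro ⟨g, rfl⟩
    refine ⟨g * g₀⁻¹, ?_⟩
    rw [← app_mul, mul_assoc, inv_mul_cancel, mul_one]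

lemma OrbitPairAux.orbit_finite [TopologicalSpace G] [IsTopologicalGroup G] [CompactSpace G]
    (hsm : ∀ (U : Opens T) (d : D.val.obj (op U)),
      IsOpen {g : G | (ρ g).app (op U) d = d})
    (U : Opens T) (d : D.val.obj (op U)) :
    (Set.range fun g : G => (ρ g).app (op U) d).Finite := by
  have hlc : IsLocallyConstant (fun g : G => (ρ g).app (op U) d) := by
    rw [IsLocallyConstant.iff_isOpen_fiber]
    intro y
    by_cases h : ∃ g₀ : G, (ρ g₀).app (op U) d = y
    · obtain ⟨g₀, hg₀⟩ := h
      have key : (fun g : G => (ρ g).app (op U) d) ⁻¹' {y}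
          = (fun g : G => g₀⁻¹ * g) ⁻¹' {g : G | (ρ g).app (op U) d = d} := by
        ext g
        simp only [Set.mem_preimage, Set.mem_singleton_iff, Set.mem_setOf_eq]
        constructor
        · intro hg
          rw [app_mul, hg, ← hg₀, ← app_mul, inv_mul_cancel, app_one]
        · intro hg
          have := congrArg ((ρ g₀).app (op U)) hg
          rw [← app_mul, ← mul_assoc, mul_inv_cancel, one_mul] at this
          rw [this, hg₀]
      rw [key]
      exact (hsm U d).preimage (by continuity)
    · have heq : (fun g : G => (ρ g).app (op U) d) ⁻¹' {y} = ∅ := by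
        ext g
        simp only [Set.mem_preimage, Set.mem_singleton_iff, Set.mem_empty_iff_false, iff_false]
        exact fun hg => h ⟨g, hg⟩
      rw [heq]; exact isOpen_empty
  exact hlc.range_finite

lemma OrbitPairAux.map_map {A B C : Opens T} (h1 : A ≤ B) (h2 : B ≤ C)
    (x : D.val.obj (op C)) :
    D.val.map (homOfLE h1).op (D.val.map (homOfLE h2).op x)
      = D.val.map (homOfLE (h1.trans h2)).op x := by
  rw [← FunctorToTypes.map_comp_apply]
  rfl

lemma OrbitPairAux.map_self {A : Opens T} (h : A ≤ A) (x : D.val.obj (op A)) :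
    D.val.map (homOfLE h).op x = x := by
  rw [show (homOfLE h).op = 𝟙 (op A) from rfl, D.val.map_id]
  rfl

lemma OrbitPairAux.orb_refl (A : OrbitPair G D ρ) : A.le A := by
  refine ⟨_root_.le_refl _, ?_⟩
  ext x
  simp only [Set.mem_image]
  constructor
  · intro hx; exact ⟨x, hx, map_self _ x⟩
  · rintro ⟨y, hy, rfl⟩; rw [map_self]; exact hy

lemma OrbitPairAux.orb_trans {A B C : OrbitPair G D ρ} (h1 : A.le B) (h2 : B.le C) :
    A.le C := by
  obtain ⟨hU1, he1⟩ := h1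
  obtain ⟨hU2, he2⟩ := h2
  refine ⟨hU1.trans hU2, ?_⟩
  rw [he1, he2, ← Set.image_comp]
  apply Set.image_congr
  intro x _
  exact map_map hU1 hU2 x

lemma OrbitPairAux.leU {A B : OrbitPair G D ρ} (h : A.le B) : A.U ≤ B.U := h.choose

lemma OrbitPairAux.leγ {A B : OrbitPair G D ρ} (h : A.le B) :
    A.γ = D.val.map (homOfLE (leU h)).op '' B.γ := h.choose_spec

end Aux

open OrbitPairAux in
/-- if `G` is a profinite group and `D` is a sheaf of smooth `G`-sets on a
topological space `T`, then every pair `(U, γ)` of a nonempty open `U` and a `G`-orbit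
`γ ⊆ D(U)` admits a majorant which is a maximal element of the partially ordered set of
all such pairs. -/
theorem orbitPair_exists_maximal_majorant
    {T : TopCat.{u}} (G : Type u) [Group G] [TopologicalSpace G] [IsTopologicalGroup G]
    [CompactSpace G] [T2Space G] [TotallyDisconnectedSpace G]
    (D : TopCat.Sheaf (Type u) T) (ρ : G →* CategoryTheory.End D.val)
    (hsm : ∀ (U : Opens T) (d : D.val.obj (op U)),
      IsOpen {g : G | (ρ g).app (op U) d = d})
    (P : OrbitPair G D ρ) :
    ∃ Q : OrbitPair G D ρ, P.le Q ∧ ∀ R : OrbitPair G D ρ, Q.le R → R.le Q := by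
  classical
  let S := {Q : OrbitPair G D ρ // P.le Q}
  have hchains : ∀ c : Set S, IsChain (fun a b : S => a.1.le b.1) c →
      ∃ ub : S, ∀ a ∈ c, a.1.le ub.1 := by
    intro c hc
    rcases Set.eq_empty_or_nonempty c with rfl | hne
    · exact ⟨⟨P, orb_refl P⟩, by simp⟩
    letI : Preorder ↥c :=
      { le := fun a b => a.1.1.le b.1.1
        le_refl := fun a => orb_refl _
        le_trans := fun _ _ _ h1 h2 => orb_trans h1 h2 }
    have htot : ∀ a b : ↥c, a ≤ b ∨ b ≤ a := by
      intro a b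
      by_cases hab : (a : S) = (b : S)
      · left; exact le_of_eq (Subtype.ext hab)
      · exact hc a.2 b.2 hab
    haveI : IsDirected ↥c (· ≤ ·) := by
      constructor
      intro a b
      rcases htot a b with h | h
      · exact ⟨b, h, le_refl b⟩
      · exact ⟨a, le_refl a, h⟩
    let F : (↥c)ᵒᵖ ⥤ Type u :=
      { obj := fun j => ↥(j.unop.1.1.γ)
        map := fun {j k} f => TypeCat.ofHom fun x =>
          ⟨D.val.map (homOfLE (leU (leOfHom f.unop))).op x.1, by
            rw [leγ (leOfHom f.unop)]
            exact Set.mem_image_of_mem _ x.2⟩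
        map_id := fun j => by
          ext x
          exact map_self _ x.1
        map_comp := fun {i j k} f g => by
          ext x
          exact (map_map _ _ x.1).symm }
    haveI : ∀ j : (↥c)ᵒᵖ, Finite (F.obj j) := by
      intro j
      obtain ⟨d, hd⟩ := j.unop.1.1.isOrbit
      have : (j.unop.1.1.γ).Finite := hd ▸ orbit_finite hsm _ d
      exact this.to_subtype
    haveI : ∀ j : (↥c)ᵒᵖ, Nonempty (F.obj j) := by
      intro j
      obtain ⟨d, hd⟩ := j.unop.1.1.isOrbit
      exact ⟨⟨d, by rw [hd]; exact ⟨1, app_one _ d⟩⟩⟩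
    obtain ⟨s, hs⟩ := nonempty_sections_of_finite_inverse_system F
    set Ufam : ↥c → Opens T := fun j => j.1.1.U with hUfam
    let sf : ∀ j : ↥c, D.val.obj (op (Ufam j)) := fun j => (s (op j)).1
    have hres : ∀ {i j : ↥c} (h : i ≤ j),
        sf i = D.val.map (homOfLE (leU h)).op (sf j) :=
      fun {i j} h => by exact (congrArg Subtype.val (hs ((homOfLE h).op))).symm
    have hcompat : TopCat.Presheaf.IsCompatible D.val Ufam sf := by
      intro i j
      rcases htot i j with h | h
      · rw [hres h]
        exact map_map inf_le_left (leU h) (sf j)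
      · rw [hres h]
        exact (map_map inf_le_right (leU h) (sf i)).symm
    obtain ⟨dd, hdd, -⟩ := D.existsUnique_gluing Ufam sf hcompat
    obtain ⟨a₀, ha₀⟩ := hne
    have hUne : ((iSup Ufam : Opens T) : Set T).Nonempty := by
      obtain ⟨t, ht⟩ := a₀.1.hU
      exact ⟨t, le_iSup Ufam ⟨a₀, ha₀⟩ ht⟩
    let Q₀ : OrbitPair G D ρ :=
      { U := iSup Ufam
        hU := hUne
        γ := Set.range fun g : G => (ρ g).app (op (iSup Ufam)) dd
        isOrbit := ⟨dd, rfl⟩ }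
    have hbound : ∀ a : S, ∀ ha : a ∈ c, a.1.le Q₀ := by
      intro a ha
      set j : ↥c := ⟨a, ha⟩ with hj
      refine ⟨le_iSup Ufam j, ?_⟩
      have hrange : (fun g : G =>
          D.val.map (homOfLE (le_iSup Ufam j)).op ((ρ g).app (op (iSup Ufam)) dd))
          = fun g : G => (ρ g).app (op (Ufam j)) (sf j) := by
        funext g
        rw [app_nat]
        exact congrArg ((ρ g).app _) (hdd j)
      show a.1.γ = D.val.map (homOfLE (le_iSup Ufam j)).op ''
        Set.range (fun g : G => (ρ g).app (op (iSup Ufam)) dd)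
      rw [← Set.range_comp]
      show a.1.γ = Set.range (fun g : G =>
        D.val.map (homOfLE (le_iSup Ufam j)).op ((ρ g).app (op (iSup Ufam)) dd))
      rw [hrange]
      obtain ⟨d₀, hd₀⟩ := a.1.isOrbit
      have hmem : sf j ∈ Set.range fun g : G => (ρ g).app (op (Ufam j)) d₀ :=
        hd₀ ▸ (s (op j)).2
      rw [orbit_eq_of_mem hmem]
      exact hd₀
    exact ⟨⟨Q₀, orb_trans a₀.2 (hbound a₀ ha₀)⟩, fun a ha => hbound a ha⟩
  obtain ⟨m, hm⟩ := exists_maximal_of_chains_bounded hchains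
    (fun {a b c} h1 h2 => orb_trans h1 h2)
  exact ⟨m.1, m.2, fun R hR => hm ⟨R, orb_trans m.2 hR⟩ hR⟩
end
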